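/- Let K be a commutative ring, n ≥ 1, and let x : Finset(Fin n) → K be any function with x(∅) = 1. For J ⊆ {1,…,n} define y(J) = ∑_{σ ∈ Π(J)} (−1)^{|σ|−1}·(|σ|−1)! · ∏_{B∈σ} x(B). Then for every I ⊆ {1,…,n} and every set partition ν of I, ∏_{B∈ν} x(B) = ∑_{π ∈ Π(I), π ≤ ν} ∏_{B∈π} y(B), where π ≤ ν means the partition π refines ν. -/

import Mathlib

open Finset
namespace CumulantAux
variable {α : Type*} [DecidableEq α] {K : Type*} [CommRing K]

/-- the Möbius coefficient -/
def cc (K : Type*) [CommRing K] (m : ℕ) : K := (-1) ^ (m - 1) * (m - 1).factorial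

/-- Restrict a finpartition to a set `B` such that every part is inside or disjoint from `B`. -/
def restr {s : Finset α} (π : Finpartition s) (B : Finset α)
    (h : ∀ C ∈ π.parts, C ⊆ B ∨ Disjoint C B) (hB : B ⊆ s) : Finpartition B where
  parts := π.parts.filter (· ⊆ B)
  supIndep := π.supIndep.subset (filter_subset _ _)
  sup_parts := by
    apply le_antisymm
    · exact Finset.sup_le fun C hC => (mem_filter.1 hC).2
    · intro a ha
      obtain ⟨C, hC, haC⟩ := π.exists_mem (hB ha)
      rcases h C hC with h' | h'
      · have hmem : C ∈ π.parts.filter (· ⊆ B) := mem_filter.2 ⟨hC, h'⟩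
        exact Finset.mem_of_subset (Finset.le_sup (f := id) hmem) haC
      · exact absurd ha (Finset.disjoint_left.1 h' haC)
  bot_notMem := fun h' => π.bot_notMem (mem_filter.1 h').1

@[simp] lemma restr_parts {s : Finset α} (π : Finpartition s) (B : Finset α)
    (h : ∀ C ∈ π.parts, C ⊆ B ∨ Disjoint C B) (hB : B ⊆ s) :
    (restr π B h hB).parts = π.parts.filter (· ⊆ B) := rfl

lemma cond_of_le {s : Finset α} {π ν : Finpartition s} (hle : π ≤ ν) {B : Finset α}
    (hB : B ∈ ν.parts) : ∀ C ∈ π.parts, C ⊆ B ∨ Disjoint C B := by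
  intro C hC
  obtain ⟨B', hB', hCB'⟩ := hle hC
  rcases eq_or_ne B' B with rfl | hne
  · exact Or.inl hCB'
  · exact Or.inr ((ν.disjoint hB' hB hne).mono_left hCB')

/-- Restriction of a refinement to a part. -/
def restrLe {s : Finset α} {π ν : Finpartition s} (hle : π ≤ ν) {B : Finset α}
    (hB : B ∈ ν.parts) : Finpartition B :=
  restr π B (cond_of_le hle hB) (ν.le hB)

lemma bind_le {s : Finset α} (ν : Finpartition s) (p : ∀ B ∈ ν.parts, Finpartition B) :
    ν.bind p ≤ ν := by
  intro C hC
  rw [Finpartition.mem_bind] at hC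
  obtain ⟨A, hA, h⟩ := hC
  exact ⟨A, hA, (p A hA).le h⟩

lemma bind_parts_filter {s : Finset α} (ν : Finpartition s) (p : ∀ B ∈ ν.parts, Finpartition B)
    {B : Finset α} (hB : B ∈ ν.parts) :
    (ν.bind p).parts.filter (· ⊆ B) = (p B hB).parts := by
  ext C
  simp only [mem_filter, Finpartition.mem_bind]
  constructor
  · rintro ⟨⟨A, hA, hCA⟩, hCB⟩
    obtain ⟨a, haC⟩ := (p A hA).nonempty_of_mem_parts hCA
    have hAB : A = B := ν.eq_of_mem_parts hA hB ((p A hA).le hCA haC) (hCB haC)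
    subst hAB; exact hCA
  · intro hC
    exact ⟨⟨B, hB, hC⟩, (p B hB).le hC⟩


@[simp] lemma restrLe_parts {s : Finset α} {π ν : Finpartition s} (hle : π ≤ ν) {B : Finset α}
    (hB : B ∈ ν.parts) : (restrLe hle hB).parts = π.parts.filter (· ⊆ B) := rfl

lemma prod_parts_decomp {s : Finset α} {π ν : Finpartition s} (hle : π ≤ ν) (f : Finset α → K) :
    ∏ C ∈ π.parts, f C = ∏ B ∈ ν.parts, ∏ C ∈ π.parts.filter (· ⊆ B), f C := by
  classical
  rw [← Finset.prod_biUnion ?hdisj]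
  case hdisj =>
    intro B hB B' hB' hne
    rw [Function.onFun, Finset.disjoint_left]
    intro C hC hC'
    obtain ⟨a, haC⟩ := π.nonempty_of_mem_parts (mem_filter.1 hC).1
    exact hne (ν.eq_of_mem_parts (Finset.mem_coe.1 hB) (Finset.mem_coe.1 hB')
      ((mem_filter.1 hC).2 haC) ((mem_filter.1 hC').2 haC))
  congr 1
  ext C
  simp only [mem_biUnion, mem_filter]
  constructor
  · intro hC; obtain ⟨B, hB, hCB⟩ := hle hC; exact ⟨B, hB, hC, hCB⟩
  · rintro ⟨B, _, hC, _⟩; exact hC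

open scoped Classical in
lemma sum_refinements_eq_prod {s : Finset α} (ν : Finpartition s)
    (g : Finset α → Finset (Finset α) → K) :
    ∑ π ∈ univ.filter (· ≤ ν), ∏ B ∈ ν.parts, g B (π.parts.filter (· ⊆ B))
      = ∏ B ∈ ν.parts.attach, ∑ σ : Finpartition (B : Finset α), g B σ.parts := by
  rw [← Finset.univ_eq_attach, Finset.prod_univ_sum (t := fun _ => univ)
      (f := fun (B : {x // x ∈ ν.parts}) (σ : Finpartition (B : Finset α)) => g B σ.parts)]
  refine Finset.sum_bij' (fun π hπ B => restrLe (mem_filter.1 hπ).2 B.2)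
    (fun p _ => ν.bind (fun B hB => p ⟨B, hB⟩)) ?_ ?_ ?_ ?_ ?_
  · intro π hπ
    simp [Fintype.mem_piFinset]
  · intro p hp
    exact mem_filter.2 ⟨mem_univ _, bind_le ν _⟩
  · intro π hπ
    apply Finpartition.ext
    ext C
    rw [Finpartition.mem_bind]
    constructor
    · rintro ⟨A, hA, hC⟩
      exact (mem_filter.1 hC).1
    · intro hC
      obtain ⟨B, hB, hCB⟩ := (mem_filter.1 hπ).2 hC
      exact ⟨B, hB, mem_filter.2 ⟨hC, hCB⟩⟩
  · intro p hp
    funext B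
    apply Finpartition.ext
    rw [restrLe_parts, bind_parts_filter ν (fun B hB => p ⟨B, hB⟩) B.2]
  · intro π hπ
    simp only [restrLe_parts]
    rw [Finset.univ_eq_attach, Finset.prod_attach ν.parts
      (fun C => g C (π.parts.filter (· ⊆ C)))]


lemma parts_empty {β : Type*} [DecidableEq β] (τ : Finpartition (∅ : Finset β)) :
    τ.parts = ∅ :=
  Finpartition.parts_eq_empty_iff.2 Finset.bot_eq_empty.symm

lemma sum_prod_cc_empty {β : Type*} [DecidableEq β] (U : Finset β) (hU : U = ∅) :
    ∑ τ : Finpartition U, ∏ P ∈ τ.parts, cc K P.card = 1 := by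
  classical
  subst hU
  haveI : Unique (Finpartition (∅ : Finset β)) :=
    { default := ⟨∅, Finset.supIndep_empty _, by simp, by simp⟩
      uniq := fun τ => Finpartition.ext (by rw [parts_empty, parts_empty]) }
  rw [Finset.univ_unique, Finset.sum_singleton, parts_empty, Finset.prod_empty]

lemma cond2 {β : Type*} [DecidableEq β] {S B : Finset β} {a : β} {τ : Finpartition S}
    (ha : a ∈ S) (hB : τ.part a = B) :
    ∀ C ∈ τ.parts, C ⊆ S \ B ∨ Disjoint C (S \ B) := by
  subst hB
  intro C hC
  rcases eq_or_ne C (τ.part a) with rfl | hne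
  · exact Or.inr Finset.disjoint_sdiff
  · exact Or.inl (Finset.subset_sdiff.2 ⟨τ.le hC, τ.disjoint hC (τ.part_mem.2 ha) hne⟩)

/-- Add `B` as a new part to a finpartition of `S \ B`. -/
def addPart {β : Type*} [DecidableEq β] {S B : Finset β} {a : β} (haB : a ∈ B) (hBS : B ⊆ S)
    (τ' : Finpartition (S \ B)) : Finpartition S :=
  τ'.extend (fun h => Finset.notMem_empty a (by rw [← Finset.bot_eq_empty, ← h]; exact haB))
    Finset.sdiff_disjoint (by rw [sup_eq_union, Finset.sdiff_union_of_subset hBS])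

lemma addPart_parts {β : Type*} [DecidableEq β] {S B : Finset β} {a : β} (haB : a ∈ B)
    (hBS : B ⊆ S) (τ' : Finpartition (S \ B)) :
    (addPart haB hBS τ').parts = insert B τ'.parts := rfl

lemma parts_insert_eq {β : Type*} [DecidableEq β] {S B : Finset β} {a : β} (ha : a ∈ S)
    {τ : Finpartition S} (hB' : τ.part a = B) :
    insert B (τ.parts.filter (· ⊆ S \ B)) = τ.parts := by
  classical
  have hBmem : B ∈ τ.parts := hB' ▸ τ.part_mem.2 ha
  ext C
  simp only [mem_insert, mem_filter]
  constructor
  · rintro (rfl | ⟨hC, _⟩)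
    · exact hBmem
    · exact hC
  · intro hC
    rcases eq_or_ne C B with rfl | hne
    · exact Or.inl rfl
    · exact Or.inr ⟨hC, Finset.subset_sdiff.2 ⟨τ.le hC, τ.disjoint hC hBmem hne⟩⟩

lemma not_subset_sdiff {β : Type*} [DecidableEq β] {S B : Finset β} {a : β} (haB : a ∈ B) :
    ¬ B ⊆ S \ B := fun h => (Finset.mem_sdiff.1 (h haB)).2 haB

open scoped Classical in
lemma key_sum {β : Type*} [DecidableEq β] :
    ∀ S : Finset β, S.Nonempty →
      ∑ τ : Finpartition S, ∏ P ∈ τ.parts, cc K P.card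
        = if S.card = 1 then (1 : K) else 0 := by
  classical
  intro S
  induction S using Finset.strongInduction with
  | _ S IH =>
  intro hS
  obtain ⟨a, ha⟩ := hS
  set T := S.powerset.filter (fun B => a ∈ B) with hT
  have hmaps : ∀ τ : Finpartition S, τ ∈ (univ : Finset (Finpartition S)) → τ.part a ∈ T :=
    fun τ _ => mem_filter.2 ⟨mem_powerset.2 (τ.le (τ.part_mem.2 ha)), τ.mem_part ha⟩
  rw [← Finset.sum_fiberwise_of_maps_to hmaps]
  have inner : ∀ B ∈ T,
      (∑ τ ∈ univ.filter (fun τ : Finpartition S => τ.part a = B),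
          ∏ P ∈ τ.parts, cc K P.card)
        = cc K B.card * ∑ τ' : Finpartition (S \ B), ∏ P ∈ τ'.parts, cc K P.card := by
    intro B hB
    obtain ⟨hBS, haB⟩ : B ⊆ S ∧ a ∈ B :=
      ⟨mem_powerset.1 (mem_filter.1 hB).1, (mem_filter.1 hB).2⟩
    rw [Finset.mul_sum]
    refine Finset.sum_bij'
      (fun τ hτ => restr τ (S \ B) (cond2 ha (mem_filter.1 hτ).2) sdiff_subset)
      (fun τ' _ => addPart haB hBS τ') (fun _ _ => mem_univ _) ?_ ?_ ?_ ?_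
    · intro τ' _
      have hBp : B ∈ (addPart haB hBS τ').parts := by
        rw [addPart_parts]; exact mem_insert_self _ _
      exact mem_filter.2 ⟨mem_univ _, Finpartition.part_eq_of_mem _ hBp haB⟩
    · intro τ hτ
      apply Finpartition.ext
      rw [addPart_parts, restr_parts, parts_insert_eq ha (mem_filter.1 hτ).2]
    · intro τ' _
      apply Finpartition.ext
      rw [restr_parts, addPart_parts, filter_insert, if_neg (not_subset_sdiff haB),
        filter_true_of_mem (p := fun x => x ⊆ S \ B) (fun C hC => τ'.le hC)]
    · intro τ hτ
      have hpi := parts_insert_eq ha (mem_filter.1 hτ).2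
      have hnot : B ∉ τ.parts.filter (· ⊆ S \ B) :=
        fun h => not_subset_sdiff (S := S) haB (mem_filter.1 h).2
      rw [restr_parts]
      conv_lhs => rw [← hpi]
      rw [Finset.prod_insert hnot]
  rw [Finset.sum_congr rfl inner]
  have hST : S ∈ T := mem_filter.2 ⟨mem_powerset.2 Finset.Subset.rfl, ha⟩
  rw [← Finset.add_sum_erase T _ hST, sum_prod_cc_empty (S \ S) (Finset.sdiff_self S), mul_one]
  have hIH : ∀ B ∈ T.erase S,
      (cc K B.card * ∑ τ' : Finpartition (S \ B), ∏ P ∈ τ'.parts, cc K P.card)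
        = if (S \ B).card = 1 then cc K B.card else 0 := by
    intro B hB
    obtain ⟨hBne, hBT⟩ := mem_erase.1 hB
    obtain ⟨hBS, haB⟩ : B ⊆ S ∧ a ∈ B :=
      ⟨mem_powerset.1 (mem_filter.1 hBT).1, (mem_filter.1 hBT).2⟩
    have hne : (S \ B).Nonempty :=
      Finset.sdiff_nonempty.2 fun h => hBne (Finset.Subset.antisymm hBS h)
    rw [IH (S \ B) (Finset.sdiff_ssubset hBS ⟨a, haB⟩) hne]
    split <;> simp
  rw [Finset.sum_congr rfl hIH, ← Finset.sum_filter]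
  have himg : (T.erase S).filter (fun B => (S \ B).card = 1)
      = (S.erase a).image (fun b => S.erase b) := by
    ext B
    simp only [mem_filter, mem_erase, mem_image, hT, mem_powerset]
    constructor
    · rintro ⟨⟨hBne, hBS, haB⟩, hcard⟩
      obtain ⟨b, hb⟩ := Finset.card_eq_one.1 hcard
      have hbmem := hb ▸ Finset.mem_singleton_self b
      have hbS : b ∈ S := (Finset.mem_sdiff.1 hbmem).1
      have hbB : b ∉ B := (Finset.mem_sdiff.1 hbmem).2
      refine ⟨b, ⟨fun hba => hbB (hba ▸ haB), hbS⟩, ?_⟩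
      ext c
      simp only [mem_erase]
      constructor
      · rintro ⟨hcb, hcS⟩
        by_contra hcB
        have hcmem : c ∈ S \ B := Finset.mem_sdiff.2 ⟨hcS, hcB⟩
        rw [hb] at hcmem
        exact hcb (Finset.mem_singleton.1 hcmem)
      · intro hcB
        exact ⟨fun h => hbB (h ▸ hcB), hBS hcB⟩
    · rintro ⟨b, ⟨hba, hbS⟩, rfl⟩
      refine ⟨⟨fun h => Finset.notMem_erase b S (h.symm ▸ hbS), Finset.erase_subset _ _,
        Finset.mem_erase.2 ⟨fun h => hba (h.symm), ha⟩⟩, ?_⟩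
      rw [Finset.sdiff_erase_self hbS, Finset.card_singleton]
  have hinj : ∀ b ∈ S.erase a, ∀ b' ∈ S.erase a,
      S.erase b = S.erase b' → b = b' := by
    intro b hb b' hb' h
    by_contra hne
    have hmem : b ∈ S.erase b' := Finset.mem_erase.2 ⟨hne, (Finset.mem_erase.1 hb).2⟩
    rw [← h] at hmem
    exact Finset.notMem_erase b S hmem
  rw [himg, Finset.sum_image hinj]
  have hconst : ∀ b ∈ S.erase a, cc K (S.erase b).card = cc K (S.card - 1) := by
    intro b hb
    rw [Finset.card_erase_of_mem (Finset.mem_erase.1 hb).2]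
  rw [Finset.sum_congr rfl hconst, Finset.sum_const, Finset.card_erase_of_mem ha,
    nsmul_eq_mul]
  -- final arithmetic
  rcases Nat.lt_or_ge S.card 2 with h2 | h2
  · have h1 : S.card = 1 := le_antisymm (by omega) (Finset.card_pos.2 ⟨a, ha⟩)
    rw [h1, if_pos rfl]
    norm_num [cc, Nat.factorial]
  · obtain ⟨m, hm⟩ : ∃ m, S.card = m + 2 := ⟨S.card - 2, by omega⟩
    rw [hm, if_neg (by omega)]
    have e1 : m + 2 - 1 = m + 1 := rfl
    have e2 : m + 1 - 1 = m := rfl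
    simp only [cc, e1, e2]
    rw [Nat.factorial_succ, pow_succ]
    push_cast
    ring


/-- Glue a partition of the set of parts of `σ` into a coarsening of `σ`. -/
def glue {s : Finset α} (σ : Finpartition s) (τ : Finpartition σ.parts) : Finpartition s where
  parts := τ.parts.image (fun P => P.sup id)
  supIndep := by
    rw [Finset.supIndep_iff_pairwiseDisjoint]
    intro u hu v hv huv
    obtain ⟨P, hP, rfl⟩ := Finset.mem_image.1 (Finset.mem_coe.1 hu)
    obtain ⟨Q, hQ, rfl⟩ := Finset.mem_image.1 (Finset.mem_coe.1 hv)
    have hPQ : P ≠ Q := fun h => huv (by rw [h])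
    simp only [Function.onFun, id_eq]
    rw [Finset.disjoint_left]
    intro c hc hc'
    obtain ⟨C, hC, hcC⟩ := Finset.mem_sup.1 hc
    obtain ⟨C', hC', hcC'⟩ := Finset.mem_sup.1 hc'
    have hCC' : C = C' := σ.eq_of_mem_parts (τ.le hP hC) (τ.le hQ hC') hcC hcC'
    subst hCC'
    exact (Finset.disjoint_left.1 (τ.disjoint hP hQ hPQ) hC) hC'
  sup_parts := by
    apply le_antisymm
    · refine Finset.sup_le ?_
      intro u hu
      obtain ⟨P, hP, rfl⟩ := Finset.mem_image.1 hu
      exact Finset.sup_le fun C hC => σ.le (τ.le hP hC)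
    · intro c hc
      obtain ⟨C, hC, hcC⟩ := σ.exists_mem hc
      obtain ⟨P, hP, hCP⟩ := τ.exists_mem hC
      have h1 : c ∈ P.sup id := Finset.mem_sup.2 ⟨C, hCP, hcC⟩
      exact Finset.mem_of_subset (Finset.le_sup (f := id) (Finset.mem_image_of_mem _ hP)) h1
  bot_notMem := by
    intro h
    obtain ⟨P, hP, hPsup⟩ := Finset.mem_image.1 h
    obtain ⟨C, hC⟩ := τ.nonempty_of_mem_parts hP
    obtain ⟨c, hc⟩ := σ.nonempty_of_mem_parts (τ.le hP hC)
    have h1 : c ∈ P.sup id := Finset.mem_sup.2 ⟨C, hC, hc⟩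
    rw [hPsup] at h1
    exact Finset.notMem_empty c h1

@[simp] lemma glue_parts {s : Finset α} (σ : Finpartition s) (τ : Finpartition σ.parts) :
    (glue σ τ).parts = τ.parts.image (fun P => P.sup id) := rfl

lemma le_glue {s : Finset α} (σ : Finpartition s) (τ : Finpartition σ.parts) :
    σ ≤ glue σ τ := by
  intro C hC
  obtain ⟨P, hP, hCP⟩ := τ.exists_mem hC
  exact ⟨P.sup id, Finset.mem_image_of_mem _ hP, Finset.le_sup (f := id) hCP⟩

lemma filter_sup_eq {s : Finset α} (σ : Finpartition s) (τ : Finpartition σ.parts)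
    {P : Finset (Finset α)} (hP : P ∈ τ.parts) :
    σ.parts.filter (· ⊆ P.sup id) = P := by
  ext C
  simp only [mem_filter]
  constructor
  · rintro ⟨hC, hsub⟩
    obtain ⟨c, hc⟩ := σ.nonempty_of_mem_parts hC
    obtain ⟨C', hC', hcC'⟩ := Finset.mem_sup.1 (hsub hc)
    have hCC' : C = C' := σ.eq_of_mem_parts hC (τ.le hP hC') hc hcC'
    subst hCC'
    exact hC'
  · intro hCP
    exact ⟨τ.le hP hCP, Finset.le_sup (f := id) hCP⟩

lemma sup_filter_eq {s : Finset α} {σ π : Finpartition s} (h : σ ≤ π)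
    {B : Finset α} (hB : B ∈ π.parts) :
    (σ.parts.filter (· ⊆ B)).sup id = B := by
  apply le_antisymm (Finset.sup_le fun C hC => (mem_filter.1 hC).2)
  intro c hc
  obtain ⟨C, hC, hcC⟩ := σ.exists_mem (π.le hB hc)
  obtain ⟨B', hB', hCB'⟩ := h hC
  have hBB' : B = B' := π.eq_of_mem_parts hB hB' hc (hCB' hcC)
  subst hBB'
  have hCf : C ∈ σ.parts.filter (· ⊆ B) := mem_filter.2 ⟨hC, hCB'⟩
  exact Finset.mem_of_subset (Finset.le_sup (f := id) hCf) hcC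

/-- The quotient of a coarsening `π` of `σ`, as a partition of the set of parts of `σ`. -/
def unglue {s : Finset α} (σ π : Finpartition s) (h : σ ≤ π) : Finpartition σ.parts where
  parts := π.parts.image (fun B => σ.parts.filter (· ⊆ B))
  supIndep := by
    rw [Finset.supIndep_iff_pairwiseDisjoint]
    intro u hu v hv huv
    obtain ⟨B, hB, rfl⟩ := Finset.mem_image.1 (Finset.mem_coe.1 hu)
    obtain ⟨B', hB', rfl⟩ := Finset.mem_image.1 (Finset.mem_coe.1 hv)
    have hne : B ≠ B' := fun hsame => huv (by rw [hsame])
    simp only [Function.onFun, id_eq]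
    rw [Finset.disjoint_left]
    intro C hC hC'
    obtain ⟨c, hc⟩ := σ.nonempty_of_mem_parts (mem_filter.1 hC).1
    exact hne (π.eq_of_mem_parts hB hB' ((mem_filter.1 hC).2 hc) ((mem_filter.1 hC').2 hc))
  sup_parts := by
    apply le_antisymm
    · refine Finset.sup_le ?_
      intro u hu
      obtain ⟨B, hB, rfl⟩ := Finset.mem_image.1 hu
      exact Finset.filter_subset _ _
    · intro C hC
      obtain ⟨B, hB, hCB⟩ := h hC
      have hCf : C ∈ σ.parts.filter (· ⊆ B) := mem_filter.2 ⟨hC, hCB⟩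
      have hsub : σ.parts.filter (· ⊆ B)
          ⊆ (π.parts.image (fun B => σ.parts.filter (· ⊆ B))).sup id :=
        Finset.le_sup (f := id) (b := σ.parts.filter (· ⊆ B))
          (Finset.mem_image.2 ⟨B, hB, rfl⟩)
      exact hsub hCf
  bot_notMem := by
    intro hmem
    obtain ⟨B, hB, hBf⟩ := Finset.mem_image.1 hmem
    obtain ⟨b, hb⟩ := π.nonempty_of_mem_parts hB
    obtain ⟨C, hC, hbC⟩ := σ.exists_mem (π.le hB hb)
    obtain ⟨B', hB', hCB'⟩ := h hC
    have hBB' : B = B' := π.eq_of_mem_parts hB hB' hb (hCB' hbC)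
    subst hBB'
    have : C ∈ σ.parts.filter (· ⊆ B) := mem_filter.2 ⟨hC, hCB'⟩
    rw [hBf] at this
    exact Finset.notMem_empty C this

@[simp] lemma unglue_parts {s : Finset α} (σ π : Finpartition s) (h : σ ≤ π) :
    (unglue σ π h).parts = π.parts.image (fun B => σ.parts.filter (· ⊆ B)) := rfl

open scoped Classical in
lemma coarsen_sum {s : Finset α} (σ : Finpartition s) :
    ∑ π ∈ univ.filter (fun π : Finpartition s => σ ≤ π),
        ∏ B ∈ π.parts, cc K ((σ.parts.filter (· ⊆ B)).card)
      = ∑ τ : Finpartition σ.parts, ∏ P ∈ τ.parts, cc K P.card := by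
  refine Finset.sum_bij' (fun π hπ => unglue σ π (mem_filter.1 hπ).2) (fun τ _ => glue σ τ)
    (fun _ _ => mem_univ _) (fun τ _ => mem_filter.2 ⟨mem_univ _, le_glue σ τ⟩) ?_ ?_ ?_
  · intro π hπ
    apply Finpartition.ext
    rw [glue_parts, unglue_parts, Finset.image_image]
    calc π.parts.image (fun B => (σ.parts.filter (· ⊆ B)).sup id)
        = π.parts.image id := Finset.image_congr
          (fun B hB => sup_filter_eq (mem_filter.1 hπ).2 (Finset.mem_coe.1 hB))
      _ = π.parts := Finset.image_id
  · intro τ _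
    apply Finpartition.ext
    rw [unglue_parts, glue_parts, Finset.image_image]
    calc τ.parts.image (fun P => σ.parts.filter (· ⊆ P.sup id))
        = τ.parts.image id := Finset.image_congr
          (fun P hP => filter_sup_eq σ τ (Finset.mem_coe.1 hP))
      _ = τ.parts := Finset.image_id
  · intro π hπ
    rw [unglue_parts, Finset.prod_image]
    intro B hB B' hB' hf
    rw [← sup_filter_eq (mem_filter.1 hπ).2 hB, ← sup_filter_eq (mem_filter.1 hπ).2 hB', show σ.parts.filter (· ⊆ B) = σ.parts.filter (· ⊆ B') from hf]


open scoped Classical in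
lemma moment_eq (x y : Finset α → K)
    (hy : ∀ J : Finset α, y J = ∑ σ : Finpartition J,
      cc K σ.parts.card * ∏ B ∈ σ.parts, x B)
    (J : Finset α) (hJ : J.Nonempty) :
    ∑ π : Finpartition J, ∏ B ∈ π.parts, y B = x J := by
  have hJb : J ≠ ⊥ := by rw [Finset.bot_eq_empty]; exact hJ.ne_empty
  have h1 : ∀ π : Finpartition J, ∏ B ∈ π.parts, y B
      = ∑ σ ∈ univ.filter (· ≤ π),
          (∏ B ∈ π.parts, cc K ((σ.parts.filter (· ⊆ B)).card)) * ∏ C ∈ σ.parts, x C := by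
    intro π
    calc ∏ B ∈ π.parts, y B
        = ∏ B ∈ π.parts.attach, y B.1 := (Finset.prod_attach _ _).symm
      _ = ∏ B ∈ π.parts.attach, ∑ σ : Finpartition (B : Finset α),
            cc K σ.parts.card * ∏ C ∈ σ.parts, x C :=
          Finset.prod_congr rfl fun B _ => hy B.1
      _ = ∑ σ ∈ univ.filter (· ≤ π), ∏ B ∈ π.parts,
            (cc K ((σ.parts.filter (· ⊆ B)).card) * ∏ C ∈ σ.parts.filter (· ⊆ B), x C) :=
          (sum_refinements_eq_prod π (fun B P => cc K P.card * ∏ C ∈ P, x C)).symm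
      _ = ∑ σ ∈ univ.filter (· ≤ π),
            (∏ B ∈ π.parts, cc K ((σ.parts.filter (· ⊆ B)).card)) * ∏ C ∈ σ.parts, x C := by
          refine Finset.sum_congr rfl fun σ hσ => ?_
          rw [Finset.prod_mul_distrib, ← prod_parts_decomp (mem_filter.1 hσ).2 x]
  rw [Finset.sum_congr rfl fun π _ => h1 π]
  rw [Finset.sum_comm' (t' := (univ : Finset (Finpartition J)))
    (s' := fun σ => univ.filter (fun π : Finpartition J => σ ≤ π))
    (fun π σ => by simp only [mem_filter, mem_univ, true_and, and_true])]
  have h2 : ∀ σ : Finpartition J,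
      (∑ π ∈ univ.filter (fun π : Finpartition J => σ ≤ π),
        (∏ B ∈ π.parts, cc K ((σ.parts.filter (· ⊆ B)).card)) * ∏ C ∈ σ.parts, x C)
      = (if σ.parts.card = 1 then (1 : K) else 0) * ∏ C ∈ σ.parts, x C := by
    intro σ
    rw [← Finset.sum_mul, coarsen_sum σ, key_sum σ.parts (σ.parts_nonempty hJb)]
  rw [Finset.sum_congr rfl fun σ _ => h2 σ]
  simp only [ite_mul, one_mul, zero_mul]
  rw [← Finset.sum_filter]
  have hfil : univ.filter (fun σ : Finpartition J => σ.parts.card = 1)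
      = {Finpartition.indiscrete hJb} := by
    ext σ
    simp only [mem_filter, mem_univ, true_and, mem_singleton]
    constructor
    · intro hone
      obtain ⟨B, hB⟩ := Finset.card_eq_one.1 hone
      have hsup := σ.sup_parts
      rw [hB, Finset.sup_singleton] at hsup
      simp only [id_eq] at hsup
      apply Finpartition.ext
      rw [hB, hsup]
      rfl
    · rintro rfl
      simp [Finpartition.indiscrete]
  rw [hfil, Finset.sum_singleton,
    show (Finpartition.indiscrete hJb).parts = {J} from rfl, Finset.prod_singleton]

end CumulantAux

open scoped Classical in
/-- Let `K` be a commutative ring, `n ≥ 1`, and `x : Finset (Fin n) → K`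
with `x ∅ = 1`.  For `J ⊆ [n]` define
`y(J) = ∑_{σ ∈ Π(J)} (−1)^{|σ|−1}·(|σ|−1)!·∏_{B∈σ} x(B)`.  Then for every `I ⊆ [n]` and
every set partition `ν` of `I`,
`∏_{B∈ν} x(B) = ∑_{π ∈ Π(I), π ≤ ν} ∏_{B∈π} y(B)`, where `π ≤ ν` is refinement. -/
theorem cumulant_partial_inversion {K : Type*} [CommRing K] {n : ℕ} (hn : 1 ≤ n)
    (x y : Finset (Fin n) → K) (hx0 : x ∅ = 1)
    (hy : ∀ J : Finset (Fin n), y J = ∑ σ : Finpartition J,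
      (-1 : K) ^ (σ.parts.card - 1) * (σ.parts.card - 1).factorial * ∏ B ∈ σ.parts, x B) :
    ∀ (I : Finset (Fin n)) (ν : Finpartition I),
      ∏ B ∈ ν.parts, x B
        = ∑ π ∈ Finset.univ.filter (fun π : Finpartition I => π ≤ ν),
            ∏ B ∈ π.parts, y B := by
  have hy' : ∀ J : Finset (Fin n), y J = ∑ σ : Finpartition J,
      CumulantAux.cc K σ.parts.card * ∏ B ∈ σ.parts, x B := by
    intro J
    rw [hy J]
    exact Finset.sum_congr rfl fun σ _ => by rw [CumulantAux.cc, mul_assoc]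
  intro I ν
  calc ∏ B ∈ ν.parts, x B
      = ∏ B ∈ ν.parts.attach, x B.1 := (Finset.prod_attach _ _).symm
    _ = ∏ B ∈ ν.parts.attach, ∑ σ : Finpartition (B : Finset (Fin n)),
          ∏ C ∈ σ.parts, y C :=
        Finset.prod_congr rfl fun B _ =>
          (CumulantAux.moment_eq x y hy' B.1 (ν.nonempty_of_mem_parts B.2)).symm
    _ = ∑ π ∈ Finset.univ.filter (· ≤ ν), ∏ B ∈ ν.parts,
          ∏ C ∈ π.parts.filter (· ⊆ B), y C :=
        (CumulantAux.sum_refinements_eq_prod ν (fun _ P => ∏ C ∈ P, y C)).symm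
    _ = ∑ π ∈ Finset.univ.filter (fun π : Finpartition I => π ≤ ν), ∏ B ∈ π.parts, y B :=
        Finset.sum_congr rfl fun π hπ =>
          (CumulantAux.prod_parts_decomp (Finset.mem_filter.1 hπ).2 y).symm
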